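/- With P_h and Q_h the numerator and denominator convergent polynomials of the square series J-fraction, for every h ≥ 1 and every 0 ≤ n ≤ h, the coefficient of z^n in the formal power series expansion of P_h(q,z)/Q_h(q,z) (expanded about z = 0) equals q^{n²}. -/

import Mathlib

/-- The rational function field in the indeterminate `q`. -/
noncomputable abbrev Kq : Type := RatFunc ℚ

/-- The indeterminate `q` of the rational function field. -/
noncomputable def qvar : Kq := RatFunc.X

/-- The numerator convergents `P_h(q, z)`, as formal power series in `z = X` over the field of
rational functions in `q`. -/
noncomputable def Pser : ℕ → PowerSeries Kq
  | 0 => 0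
  | 1 => 1
  | (h + 2) =>
      (1 - PowerSeries.C (R := Kq) (qvar ^ (2 * (h + 2) - 3) *
            (qvar ^ (2 * (h + 2)) + qvar ^ (2 * (h + 2) - 2) - 1)) * PowerSeries.X) *
          Pser (h + 1)
        - PowerSeries.C (R := Kq) (qvar ^ (6 * (h + 2) - 10) * (qvar ^ (2 * (h + 2) - 2) - 1)) *
            PowerSeries.X ^ 2 * Pser h

/-- The denominator convergents `Q_h(q, z)`, as formal power series in `z = X` over the field of
rational functions in `q`. -/
noncomputable def Qser : ℕ → PowerSeries Kq
  | 0 => 1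
  | 1 => 1 - PowerSeries.C (R := Kq) qvar * PowerSeries.X
  | (h + 2) =>
      (1 - PowerSeries.C (R := Kq) (qvar ^ (2 * (h + 2) - 3) *
            (qvar ^ (2 * (h + 2)) + qvar ^ (2 * (h + 2) - 2) - 1)) * PowerSeries.X) *
          Qser (h + 1)
        - PowerSeries.C (R := Kq) (qvar ^ (6 * (h + 2) - 10) * (qvar ^ (2 * (h + 2) - 2) - 1)) *
            PowerSeries.X ^ 2 * Qser h

lemma qvar_pow_ne_one (s : ℕ) (hs : s ≠ 0) : qvar ^ s ≠ 1 := by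
  intro hcon
  have h1 : (algebraMap (Polynomial ℚ) (RatFunc ℚ)) (Polynomial.X ^ s) =
      (algebraMap (Polynomial ℚ) (RatFunc ℚ)) 1 := by
    rw [map_pow, map_one, RatFunc.algebraMap_X]
    exact hcon
  have h2 := RatFunc.algebraMap_injective ℚ h1
  have h3 := congrArg Polynomial.natDegree h2
  simp [Polynomial.natDegree_X_pow] at h3
  exact hs h3

lemma one_sub_qvar_pow_ne_zero (s : ℕ) (hs : s ≠ 0) : (1 : Kq) - qvar ^ s ≠ 0 := by
  intro hcon
  exact qvar_pow_ne_one s hs (by linear_combination -hcon)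

noncomputable def gnum (m n : ℕ) : Kq := ∏ j ∈ Finset.range n, (1 - qvar ^ (2 * (m - j)))
noncomputable def gden (n : ℕ) : Kq := ∏ j ∈ Finset.range n, (1 - qvar ^ (2 * (j + 1)))

lemma gden_ne_zero (n : ℕ) : gden n ≠ 0 := by
  unfold gden
  apply Finset.prod_ne_zero_iff.mpr
  intro j _
  exact one_sub_qvar_pow_ne_zero _ (by omega)

noncomputable def gb (m n : ℕ) : Kq := gnum m n / gden n

@[simp] lemma gb_zero (m : ℕ) : gb m 0 = 1 := by simp [gb, gnum, gden]

lemma gb_self (n : ℕ) : gb n n = 1 := by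
  have h : gnum n n = gden n := by
    unfold gnum gden
    rw [← Finset.prod_range_reflect (fun j => 1 - qvar ^ (2 * (j + 1))) n]
    apply Finset.prod_congr rfl
    intro j hj
    simp only [Finset.mem_range] at hj
    congr 2
    omega
  rw [gb, h, div_self (gden_ne_zero n)]

lemma gb_ratio (m n : ℕ) :
    (1 - qvar ^ (2 * (n + 1))) * gb m (n + 1) = (1 - qvar ^ (2 * (m - n))) * gb m n := by
  have hnum : gnum m (n + 1) = gnum m n * (1 - qvar ^ (2 * (m - n))) :=
    Finset.prod_range_succ _ n
  have hden : gden (n + 1) = gden n * (1 - qvar ^ (2 * (n + 1))) :=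
    Finset.prod_range_succ _ n
  have d1 := gden_ne_zero n
  have d2 : (1 : Kq) - qvar ^ (2 * (n + 1)) ≠ 0 := one_sub_qvar_pow_ne_zero _ (by omega)
  rw [gb, gb, hnum, hden]
  field_simp

lemma gb_pascal (m n : ℕ) (h : n ≤ m) :
    gb (m + 1) (n + 1) = gb m (n + 1) + qvar ^ (2 * (m - n)) * gb m n := by
  obtain ⟨d, rfl⟩ := Nat.exists_eq_add_of_le h
  have hnum1 : gnum (n + d + 1) (n + 1) = (1 - qvar ^ (2 * (n + d + 1))) * gnum (n + d) n := by
    rw [gnum, Finset.prod_range_succ']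
    rw [gnum, mul_comm]
    congr 1
    apply Finset.prod_congr rfl
    intro j hj
    congr 2
    omega
  have hnum2 : gnum (n + d) (n + 1) = gnum (n + d) n * (1 - qvar ^ (2 * d)) := by
    have := Finset.prod_range_succ (fun j => 1 - qvar ^ (2 * ((n + d) - j))) n
    rw [gnum, this]
    congr 3
    omega
  have hden : gden (n + 1) = gden n * (1 - qvar ^ (2 * (n + 1))) :=
    Finset.prod_range_succ _ n
  have d1 := gden_ne_zero n
  have d2 : (1 : Kq) - qvar ^ (2 * (n + 1)) ≠ 0 := one_sub_qvar_pow_ne_zero _ (by omega)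
  have hmn : n + d - n = d := by omega
  rw [gb, gb, gb, hnum1, hnum2, hden, hmn]
  field_simp
  ring

open PowerSeries

/-- coefficients of the tail series `H_{g+1}` -/
noncomputable def Acoef : ℕ → ℕ → Kq
  | 0, n => if n = 0 then 1 else 0
  | (g + 1), n => qvar ^ (n ^ 2 + 2 * g * n) * gb (n + g) n

/-- the tail power series -/
noncomputable def Hser (g : ℕ) : PowerSeries Kq := PowerSeries.mk (Acoef g)

lemma coeff_Hser (g n : ℕ) : (coeff (R := Kq) n) (Hser g) = Acoef g n := coeff_mk n _

lemma Hser_zero : Hser 0 = 1 := by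
  ext n
  rw [coeff_Hser]
  cases n with
  | zero => simp [Acoef]
  | succ k => simp [Acoef]

lemma coeff_Hser_one (n : ℕ) : (coeff (R := Kq) n) (Hser 1) = qvar ^ (n ^ 2) := by
  rw [coeff_Hser]
  show qvar ^ (n ^ 2 + 2 * 0 * n) * gb (n + 0) n = qvar ^ (n ^ 2)
  simp [gb_self]

noncomputable def cf (h : ℕ) : Kq := qvar ^ (2 * h - 3) * (qvar ^ (2 * h) + qvar ^ (2 * h - 2) - 1)
noncomputable def af (h : ℕ) : Kq := qvar ^ (6 * h - 10) * (qvar ^ (2 * h - 2) - 1)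

lemma coeff_comb (a b : Kq) (f g : PowerSeries Kq) (n : ℕ) :
    (coeff (R := Kq) n) ((1 - PowerSeries.C (R := Kq) a * X) * f - PowerSeries.C (R := Kq) b * X ^ 2 * g) =
      (coeff (R := Kq) n) f - a * (if 1 ≤ n then (coeff (R := Kq) (n - 1)) f else 0)
        - b * (if 2 ≤ n then (coeff (R := Kq) (n - 2)) g else 0) := by
  rw [sub_mul, one_mul, mul_assoc, mul_assoc, map_sub, map_sub, coeff_C_mul, coeff_C_mul,
    coeff_X_pow_mul' g 2 n, ← pow_one (X : PowerSeries Kq), coeff_X_pow_mul' f 1 n]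

lemma coeff_comb0 (a b : Kq) (f g : PowerSeries Kq) :
    (coeff (R := Kq) 0) ((1 - PowerSeries.C (R := Kq) a * X) * f - PowerSeries.C (R := Kq) b * X ^ 2 * g) =
      (coeff (R := Kq) 0) f := by
  rw [coeff_comb]; norm_num

lemma coeff_comb1 (a b : Kq) (f g : PowerSeries Kq) :
    (coeff (R := Kq) 1) ((1 - PowerSeries.C (R := Kq) a * X) * f - PowerSeries.C (R := Kq) b * X ^ 2 * g) =
      (coeff (R := Kq) 1) f - a * (coeff (R := Kq) 0) f := by
  rw [coeff_comb]; norm_num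

lemma coeff_comb2 (a b : Kq) (f g : PowerSeries Kq) (k : ℕ) :
    (coeff (R := Kq) (k + 2)) ((1 - PowerSeries.C (R := Kq) a * X) * f - PowerSeries.C (R := Kq) b * X ^ 2 * g) =
      (coeff (R := Kq) (k + 2)) f - a * (coeff (R := Kq) (k + 1)) f - b * (coeff (R := Kq) k) g := by
  rw [coeff_comb]
  have h1 : (1:ℕ) ≤ k + 2 := by omega
  have h2 : (2:ℕ) ≤ k + 2 := by omega
  rw [if_pos h1, if_pos h2]
  norm_num

lemma Hrec0 : Hser 0 = (1 - PowerSeries.C (R := Kq) qvar * X) * Hser 1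
    - PowerSeries.C (R := Kq) (af 2) * X ^ 2 * Hser 2 := by
  ext n
  match n with
  | 0 =>
    rw [coeff_Hser, coeff_comb0, coeff_Hser]
    simp [Acoef]
  | 1 =>
    rw [coeff_Hser, coeff_comb1, coeff_Hser, coeff_Hser]
    simp only [Acoef]
    norm_num [gb_self]
  | (k + 2) =>
    rw [coeff_Hser, coeff_comb2, coeff_Hser, coeff_Hser, coeff_Hser]
    simp only [Acoef, Nat.add_zero, Nat.mul_zero, Nat.zero_mul]
    rw [if_neg (by omega : ¬ k + 2 = 0)]
    rw [gb_self (k + 2), gb_self (k + 1)]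
    have hr := gb_ratio (k + 1) k
    rw [show k + 1 - k = 1 from by omega, gb_self (k + 1)] at hr
    simp only [af]
    norm_num
    linear_combination (qvar ^ (k ^ 2 + 2 * k + 2)) * hr

lemma Hrec (g : ℕ) : Hser (g + 1) = (1 - PowerSeries.C (R := Kq) (cf (g + 2)) * X) * Hser (g + 2)
    - PowerSeries.C (R := Kq) (af (g + 3)) * X ^ 2 * Hser (g + 3) := by
  ext n
  match n with
  | 0 =>
    rw [coeff_Hser, coeff_comb0, coeff_Hser]
    simp [Acoef]
  | 1 =>
    rw [coeff_Hser, coeff_comb1, coeff_Hser, coeff_Hser]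
    simp only [Acoef, gb_zero]
    rw [show (1 : ℕ) + g = g + 1 from by omega, show (1 : ℕ) + (g + 1) = g + 2 from by omega]
    have h2 : (1 : Kq) - qvar ^ 2 ≠ 0 := one_sub_qvar_pow_ne_zero 2 (by omega)
    have r1 := gb_ratio (g + 1) 0
    have r2 := gb_ratio (g + 2) 0
    rw [gb_zero, mul_one, Nat.sub_zero] at r1 r2
    simp only [Nat.zero_add] at r1 r2
    simp only [cf]
    rw [show 2 * (g + 2) - 3 = 2 * g + 1 from by omega,
      show 2 * (g + 2) - 2 = 2 * g + 2 from by omega]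
    apply mul_left_cancel₀ h2
    linear_combination (qvar ^ (2 * g + 1)) * r1 - (qvar ^ (2 * g + 3)) * r2
  | (k + 2) =>
    rw [coeff_Hser, coeff_comb2, coeff_Hser, coeff_Hser, coeff_Hser]
    simp only [Acoef]
    rw [show k + 2 + (g + 1) = k + 2 + g + 1 from by omega,
      show k + 1 + (g + 1) = k + 2 + g from by omega,
      show k + (g + 2) = k + 2 + g from by omega]
    have hR1 := gb_ratio (k + 2 + g) (k + 1)
    rw [show k + 2 + g - (k + 1) = g + 1 from by omega] at hR1
    have hR2 := gb_ratio (k + 2 + g) k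
    rw [show k + 2 + g - k = g + 2 from by omega] at hR2
    have hP := gb_pascal (k + 2 + g) (k + 1) (by omega)
    rw [show k + 2 + g - (k + 1) = g + 1 from by omega] at hP
    simp only [cf, af]
    rw [show 2 * (g + 2) - 3 = 2 * g + 1 from by omega,
      show 2 * (g + 2) - 2 = 2 * g + 2 from by omega,
      show 6 * (g + 3) - 10 = 6 * g + 8 from by omega,
      show 2 * (g + 3) - 2 = 2 * g + 4 from by omega]
    linear_combination (qvar ^ ((k + 2) ^ 2 + 2 * g * (k + 2))) * hR1
      + (qvar ^ ((k + 2) ^ 2 + 2 * g * (k + 2) + 2 * (g + 2))) * hR2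
      - (qvar ^ ((k + 2) ^ 2 + 2 * g * (k + 2) + 2 * (k + 2))) * hP

noncomputable def Bp (h : ℕ) : Kq := ∏ k ∈ Finset.range h, af (k + 2)

lemma Qser_rec (h : ℕ) : Qser (h + 2) =
    (1 - PowerSeries.C (R := Kq) (cf (h + 2)) * X) * Qser (h + 1)
      - PowerSeries.C (R := Kq) (af (h + 2)) * X ^ 2 * Qser h := rfl

lemma Pser_rec (h : ℕ) : Pser (h + 2) =
    (1 - PowerSeries.C (R := Kq) (cf (h + 2)) * X) * Pser (h + 1)
      - PowerSeries.C (R := Kq) (af (h + 2)) * X ^ 2 * Pser h := rfl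

lemma key (h : ℕ) : Hser 1 * Qser h - Pser h
    = PowerSeries.C (R := Kq) (Bp h) * X ^ (2 * h) * Hser (h + 1) := by
  induction h using Nat.twoStepInduction with
  | zero => simp [Qser, Pser, Bp]
  | one =>
    have h0 := Hrec0
    rw [Hser_zero] at h0
    have hB : Bp 1 = af 2 := by simp [Bp]
    rw [show Qser 1 = 1 - PowerSeries.C (R := Kq) qvar * X from rfl,
      show Pser 1 = 1 from rfl, hB]
    linear_combination -h0
  | more h ih0 ih1 =>
    have hH := Hrec h
    have eB1 : Bp (h + 1) = Bp h * af (h + 2) := Finset.prod_range_succ _ h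
    have eB2 : Bp (h + 2) = Bp (h + 1) * af (h + 3) := Finset.prod_range_succ _ (h + 1)
    rw [Qser_rec, Pser_rec, eB2, eB1, map_mul, map_mul]
    rw [eB1, map_mul] at ih1
    linear_combination (1 - PowerSeries.C (R := Kq) (cf (h + 2)) * X) * ih1
      - (PowerSeries.C (R := Kq) (af (h + 2)) * X ^ 2) * ih0
      - (PowerSeries.C (R := Kq) (Bp h) * PowerSeries.C (R := Kq) (af (h + 2)) * X ^ (2 * (h + 1))) * hH

lemma Qconst (h : ℕ) : PowerSeries.constantCoeff (R := Kq) (Qser h) = 1 := by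
  induction h using Nat.twoStepInduction with
  | zero => simp [Qser]
  | one => simp [Qser]
  | more h ih0 ih1 => rw [Qser_rec]; simp [ih0, ih1]

theorem stmt7 (h n : ℕ) (hh : 1 ≤ h) (hn : n ≤ h) :
    PowerSeries.coeff (R := Kq) n (Pser h * (Qser h)⁻¹) = qvar ^ (n ^ 2) := by
  have hQ : PowerSeries.constantCoeff (R := Kq) (Qser h) ≠ 0 := by
    rw [Qconst]; exact one_ne_zero
  have hinv := PowerSeries.mul_inv_cancel (Qser h) hQ
  have hkey := key h
  have h2 : Pser h * (Qser h)⁻¹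
      = Hser 1 - X ^ (2 * h) * (PowerSeries.C (R := Kq) (Bp h) * (Hser (h + 1) * (Qser h)⁻¹)) := by
    linear_combination (-(Qser h)⁻¹) * hkey + Hser 1 * hinv
  rw [h2, map_sub, coeff_Hser_one, PowerSeries.coeff_X_pow_mul',
    if_neg (by omega : ¬ 2 * h ≤ n), sub_zero]
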